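/- Let k ≥ 2, l ≥ 2, and n ≥ k + l − 3. There exists a family Q of subsets of [n] = {1,...,n}, partially ordered by inclusion, such that: (1) Q contains no chain of k sets; (2) every antichain in Q has size at most l − 1; and (3) |Q| = (k − 1)(l − 1). -/

import Mathlib

def gset (n a j i : ℕ) : Finset (Fin n) :=
  Finset.univ.filter (fun x => x.val = j ∨ (a ≤ x.val ∧ x.val < a + i))

lemma mem_gset {n a j i : ℕ} {x : Fin n} :
    x ∈ gset n a j i ↔ (x.val = j ∨ (a ≤ x.val ∧ x.val < a + i)) := by
  simp [gset]

lemma gset_card {n a j i : ℕ} (hj : j < a) (hi : a + i ≤ n) :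
    (gset n a j i).card = i + 1 := by
  have h : ∀ m ∈ insert j (Finset.Ico a (a + i)), m < n := by
    intro m hm
    rcases Finset.mem_insert.1 hm with rfl | hm
    · omega
    · simp only [Finset.mem_Ico] at hm; omega
  have heq : gset n a j i = (insert j (Finset.Ico a (a + i))).attachFin h := by
    ext x
    simp [mem_gset, Finset.mem_attachFin, Finset.mem_Ico]
  rw [heq, Finset.card_attachFin,
    Finset.card_insert_of_notMem (by simp only [Finset.mem_Ico]; omega), Nat.card_Ico]
  omega

noncomputable def jval {n : ℕ} (S : Finset (Fin n)) : ℕ :=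
  if h : S.Nonempty then (S.min' h).val else 0

lemma jval_gset {n a j i : ℕ} (hj : j < a) (hjn : j < n) :
    jval (gset n a j i) = j := by
  have hmem : (⟨j, hjn⟩ : Fin n) ∈ gset n a j i := by simp [mem_gset]
  have hne : (gset n a j i).Nonempty := ⟨_, hmem⟩
  rw [jval, dif_pos hne]
  have h1 := Finset.min'_le _ _ hmem
  have h2 := Finset.min'_mem (gset n a j i) hne
  rw [mem_gset] at h2
  have h1' : ((gset n a j i).min' hne).val ≤ j := h1
  omega

lemma gset_mono {n a j i i' : ℕ} (h : i ≤ i') : gset n a j i ⊆ gset n a j i' := by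
  intro x hx
  rw [mem_gset] at *
  omega

theorem stmt4 (k l n : ℕ) (hk : 2 ≤ k) (hl : 2 ≤ l) (hn : k + l - 3 ≤ n) :
    ∃ Q : Finset (Finset (Fin n)),
      (∀ C ⊆ Q, IsChain (· ⊆ ·) (C : Set (Finset (Fin n))) → C.card < k) ∧
      (∀ A ⊆ Q, IsAntichain (· ⊆ ·) (A : Set (Finset (Fin n))) → A.card ≤ l - 1) ∧
      Q.card = (k - 1) * (l - 1) := by
  set a := l - 1 with ha
  set b := k - 1 with hb
  have ha1 : 1 ≤ a := by omega
  have hb1 : 1 ≤ b := by omega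
  have habn : a + (b - 1) ≤ n := by omega
  have han : a ≤ n := by omega
  refine ⟨(Finset.range a ×ˢ Finset.range b).image (fun p => gset n a p.1 p.2), ?_, ?_, ?_⟩
  · -- chains have fewer than k sets
    intro C hC hchain
    have hle : C.card ≤ (Finset.Icc 1 b).card := by
      apply Finset.card_le_card_of_injOn Finset.card
      · intro S hS
        have := hC hS
        simp only [Finset.mem_image, Finset.mem_product, Finset.mem_range] at this
        obtain ⟨⟨j, i⟩, ⟨hj, hi⟩, rfl⟩ := this
        rw [gset_card hj (by omega)]
        simp only [Finset.mem_coe, Finset.mem_Icc]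
        omega
      · intro S hS T hT hcard
        by_contra hne
        rcases hchain hS hT hne with hsub | hsub
        · exact hne (Finset.eq_of_subset_of_card_le hsub (le_of_eq hcard.symm))
        · exact hne (Finset.eq_of_subset_of_card_le hsub (le_of_eq hcard)).symm
    rw [Nat.card_Icc] at hle
    omega
  · -- antichains have at most l - 1 sets
    intro A hA hanti
    have hle : A.card ≤ (Finset.range a).card := by
      apply Finset.card_le_card_of_injOn jval
      · intro S hS
        have := hA hS
        simp only [Finset.mem_image, Finset.mem_product, Finset.mem_range] at this
        obtain ⟨⟨j, i⟩, ⟨hj, hi⟩, rfl⟩ := this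
        rw [jval_gset hj (by omega)]
        simpa using hj
      · intro S hS T hT hjv
        have hS' := hA hS
        have hT' := hA hT
        simp only [Finset.mem_image, Finset.mem_product, Finset.mem_range] at hS' hT'
        obtain ⟨⟨j, i⟩, ⟨hj, hi⟩, rfl⟩ := hS'
        obtain ⟨⟨j', i'⟩, ⟨hj', hi'⟩, rfl⟩ := hT'
        rw [jval_gset hj (by omega), jval_gset hj' (by omega)] at hjv
        subst hjv
        by_contra hne
        rcases le_total i i' with hii | hii
        · exact hanti hS hT hne (gset_mono hii)
        · exact hanti hT hS (Ne.symm hne) (gset_mono hii)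
    rw [Finset.card_range] at hle
    exact hle
  · -- cardinality
    rw [Finset.card_image_of_injOn, Finset.card_product, Finset.card_range, Finset.card_range,
      Nat.mul_comm]
    intro p hp q hq heq
    simp only [Finset.mem_coe, Finset.mem_product, Finset.mem_range] at hp hq
    have heq' : gset n a p.1 p.2 = gset n a q.1 q.2 := heq
    have hjp := jval_gset (n := n) (i := p.2) hp.1 (by omega)
    have hjq := jval_gset (n := n) (i := q.2) hq.1 (by omega)
    have hj : p.1 = q.1 := by rw [← hjp, ← hjq, heq']
    have hcp := gset_card (n := n) (i := p.2) hp.1 (by omega)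
    have hcq := gset_card (n := n) (i := q.2) hq.1 (by omega)
    have hi : p.2 = q.2 := by
      have : (gset n a p.1 p.2).card = (gset n a q.1 q.2).card := by rw [heq']
      omega
    exact Prod.ext hj hi
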